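/- arXiv:2311.08384 — 3 statements merged into one kernel-verified Lean document; each statement's English description precedes it below -/
import Mathlib

section
/- Performance difference lemma: For any two policies π and π′ of a finite discounted MDP, V^π − V^{π′} = (1/(1−γ)) · E_{(s,a)∼d^π}[A^{π′}(s,a)]. -/
open Finset

structure FinMDP (S A : Type*) [Fintype S] [Fintype A] where
  P : S → A → S → ℝ
  P_nonneg : ∀ s a s', 0 ≤ P s a s'
  P_sum : ∀ s a, ∑ s', P s a s' = 1
  r : S → A → ℝ
  r_nonneg : ∀ s a, 0 ≤ r s a
  r_le_one : ∀ s a, r s a ≤ 1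
  disc : ℝ
  disc_pos : 0 < disc
  disc_lt_one : disc < 1
  init : S → ℝ
  init_nonneg : ∀ s, 0 ≤ init s
  init_sum : ∑ s, init s = 1

variable {S A : Type*} [Fintype S] [Fintype A] [Nonempty S] [Nonempty A]

/-- A policy assigns to each state a probability mass function over actions. -/
def IsPolicy (π : S → A → ℝ) : Prop :=
  (∀ s a, 0 ≤ π s a) ∧ ∀ s, ∑ a, π s a = 1

/-- The Bellman operator `T^π`. -/
noncomputable def FinMDP.bellman (M : FinMDP S A) (π f : S → A → ℝ) (s : S) (a : A) : ℝ :=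
  M.r s a + M.disc * ∑ s', M.P s a s' * ∑ a', π s' a' * f s' a'

/-- `Q` is the action-value function of `π`, i.e. satisfies the Bellman equation. -/
def FinMDP.IsQ (M : FinMDP S A) (π Q : S → A → ℝ) : Prop :=
  ∀ s a, Q s a = M.bellman π Q s a

/-- The state value `V^π(s)` induced by a `Q`-function. -/
noncomputable def vOf (π Q : S → A → ℝ) (s : S) : ℝ := ∑ a, π s a * Q s a

/-- The scalar value `V^π = E_{s ∼ μ₀}[V^π(s)]`. -/
noncomputable def FinMDP.scalarV (M : FinMDP S A) (π Q : S → A → ℝ) : ℝ :=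
  ∑ s, M.init s * vOf π Q s

/-- Distribution of the state at time `t` under policy `π`. -/
noncomputable def FinMDP.stateDist (M : FinMDP S A) (π : S → A → ℝ) : ℕ → S → ℝ
  | 0 => M.init
  | (t + 1) => fun s' => ∑ s, ∑ a, FinMDP.stateDist M π t s * π s a * M.P s a s'

/-- The discounted occupancy measure `d^π(s,a) = (1-γ) ∑_t γ^t Pr^π(s_t = s, a_t = a)`. -/
noncomputable def FinMDP.occ (M : FinMDP S A) (π : S → A → ℝ) (s : S) (a : A) : ℝ :=
  (1 - M.disc) * ∑' t : ℕ, M.disc ^ t * M.stateDist π t s * π s a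

section PDL

variable {S A : Type*} [Fintype S] [Fintype A] [Nonempty S] [Nonempty A]

omit [Nonempty S] [Nonempty A] in
lemma stateDist_nonneg (M : FinMDP S A) {π : S → A → ℝ} (hπ : IsPolicy π) :
    ∀ t s, 0 ≤ M.stateDist π t s
  | 0, s => M.init_nonneg s
  | (t+1), s => by
      apply Finset.sum_nonneg; intro x _
      apply Finset.sum_nonneg; intro a _
      exact mul_nonneg (mul_nonneg (stateDist_nonneg M hπ t x) (hπ.1 x a)) (M.P_nonneg x a s)

omit [Nonempty S] [Nonempty A] in
lemma stateDist_sum (M : FinMDP S A) {π : S → A → ℝ} (hπ : IsPolicy π) :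
    ∀ t, ∑ s, M.stateDist π t s = 1
  | 0 => M.init_sum
  | (t+1) => by
      show ∑ s', ∑ s, ∑ a, M.stateDist π t s * π s a * M.P s a s' = 1
      rw [Finset.sum_comm]
      calc ∑ s, ∑ s', ∑ a, M.stateDist π t s * π s a * M.P s a s'
          = ∑ s, ∑ a, ∑ s', M.stateDist π t s * π s a * M.P s a s' :=
            Finset.sum_congr rfl fun s _ => Finset.sum_comm
        _ = ∑ s, M.stateDist π t s := by
            simp only [← Finset.mul_sum, M.P_sum, mul_one, hπ.2]
        _ = 1 := stateDist_sum M hπ t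

omit [Nonempty S] [Nonempty A] in
lemma stateDist_le_one (M : FinMDP S A) {π : S → A → ℝ} (hπ : IsPolicy π) (t : ℕ) (s : S) :
    M.stateDist π t s ≤ 1 := by
  calc M.stateDist π t s ≤ ∑ s', M.stateDist π t s' :=
        Finset.single_le_sum (fun i _ => stateDist_nonneg M hπ t i) (Finset.mem_univ s)
    _ = 1 := stateDist_sum M hπ t

/-- difference of state values -/
noncomputable def gFun (π π' Q Q' : S → A → ℝ) (s : S) : ℝ := vOf π Q s - vOf π' Q' s

/-- expected advantage at state s -/
noncomputable def wFun (π π' Q' : S → A → ℝ) (s : S) : ℝ :=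
  ∑ a, π s a * (Q' s a - vOf π' Q' s)

noncomputable def uSeq (M : FinMDP S A) (π π' Q' : S → A → ℝ) (t : ℕ) : ℝ :=
  ∑ s, M.stateDist π t s * wFun π π' Q' s

noncomputable def fSeq (M : FinMDP S A) (π π' Q Q' : S → A → ℝ) (t : ℕ) : ℝ :=
  ∑ s, M.stateDist π t s * gFun π π' Q Q' s

end PDL
section PDL2
variable {S A : Type*} [Fintype S] [Fintype A] [Nonempty S] [Nonempty A]

omit [Nonempty S] [Nonempty A] in
lemma qdiff (M : FinMDP S A) (π π' Q Q' : S → A → ℝ)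
    (hQ : M.IsQ π Q) (hQ' : M.IsQ π' Q') (s : S) (a : A) :
    Q s a - Q' s a = M.disc * ∑ s', M.P s a s' * gFun π π' Q Q' s' := by
  rw [hQ s a, hQ' s a]
  show (M.r s a + M.disc * ∑ s', M.P s a s' * vOf π Q s')
      - (M.r s a + M.disc * ∑ s', M.P s a s' * vOf π' Q' s')
      = M.disc * ∑ s', M.P s a s' * gFun π π' Q Q' s'
  rw [add_sub_add_left_eq_sub, ← mul_sub, ← Finset.sum_sub_distrib]
  congr 1
  exact Finset.sum_congr rfl fun s' _ => by rw [← mul_sub]; rfl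

omit [Nonempty S] [Nonempty A] in
lemma gstep (M : FinMDP S A) (π π' Q Q' : S → A → ℝ)
    (hπ : IsPolicy π) (hπ' : IsPolicy π')
    (hQ : M.IsQ π Q) (hQ' : M.IsQ π' Q') (s : S) :
    gFun π π' Q Q' s = wFun π π' Q' s
      + M.disc * ∑ s', (∑ a, π s a * M.P s a s') * gFun π π' Q Q' s' := by
  have e0 : ∀ a, π s a * Q s a = π s a * Q' s a
      + M.disc * (π s a * ∑ s', M.P s a s' * gFun π π' Q Q' s') := by
    intro a
    have h2 : Q s a = Q' s a + M.disc * ∑ s', M.P s a s' * gFun π π' Q Q' s' := by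
      linarith [qdiff M π π' Q Q' hQ hQ' s a]
    rw [h2]; ring
  have e1 : ∑ a, π s a * Q s a = ∑ a, π s a * Q' s a
      + M.disc * ∑ a, π s a * ∑ s', M.P s a s' * gFun π π' Q Q' s' := by
    rw [Finset.mul_sum, ← Finset.sum_add_distrib]
    exact Finset.sum_congr rfl fun a _ => e0 a
  have e2 : ∑ a, π s a * ∑ s', M.P s a s' * gFun π π' Q Q' s'
      = ∑ s', (∑ a, π s a * M.P s a s') * gFun π π' Q Q' s' := by
    simp only [Finset.mul_sum, Finset.sum_mul, mul_assoc]
    exact Finset.sum_comm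
  have e3 : wFun π π' Q' s = ∑ a, π s a * Q' s a - vOf π' Q' s := by
    simp only [wFun, mul_sub, Finset.sum_sub_distrib, ← Finset.sum_mul, hπ.2 s, one_mul]
  have hgs : gFun π π' Q Q' s = ∑ a, π s a * Q s a - vOf π' Q' s := rfl
  rw [hgs, e1, ← e2, e3]; ring

omit [Nonempty S] [Nonempty A] in
lemma frec (M : FinMDP S A) (π π' Q Q' : S → A → ℝ)
    (hπ : IsPolicy π) (hπ' : IsPolicy π')
    (hQ : M.IsQ π Q) (hQ' : M.IsQ π' Q') (t : ℕ) :
    fSeq M π π' Q Q' t = uSeq M π π' Q' t + M.disc * fSeq M π π' Q Q' (t + 1) := by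
  have hnext : fSeq M π π' Q Q' (t+1)
      = ∑ s, M.stateDist π t s * ∑ s', (∑ a, π s a * M.P s a s') * gFun π π' Q Q' s' := by
    show ∑ s', (∑ s, ∑ a, M.stateDist π t s * π s a * M.P s a s') * gFun π π' Q Q' s' = _
    calc ∑ s', (∑ s, ∑ a, M.stateDist π t s * π s a * M.P s a s') * gFun π π' Q Q' s'
        = ∑ s', ∑ s, ∑ a, M.stateDist π t s * π s a * M.P s a s' * gFun π π' Q Q' s' := by
          simp only [Finset.sum_mul]
      _ = ∑ s, ∑ s', ∑ a, M.stateDist π t s * π s a * M.P s a s' * gFun π π' Q Q' s' :=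
          Finset.sum_comm
      _ = ∑ s, ∑ a, ∑ s', M.stateDist π t s * π s a * M.P s a s' * gFun π π' Q Q' s' :=
          Finset.sum_congr rfl fun s _ => Finset.sum_comm
      _ = ∑ s, M.stateDist π t s * ∑ s', (∑ a, π s a * M.P s a s') * gFun π π' Q Q' s' := by
          apply Finset.sum_congr rfl; intro s _
          simp only [Finset.mul_sum, Finset.sum_mul]
          refine Eq.trans Finset.sum_comm ?_
          apply Finset.sum_congr rfl; intro s' _
          apply Finset.sum_congr rfl; intro a _
          ring
  calc fSeq M π π' Q Q' t
      = ∑ s, M.stateDist π t s * (wFun π π' Q' s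
          + M.disc * ∑ s', (∑ a, π s a * M.P s a s') * gFun π π' Q Q' s') :=
        Finset.sum_congr rfl fun s _ => by
          rw [gstep M π π' Q Q' hπ hπ' hQ hQ' s]
    _ = uSeq M π π' Q' t + M.disc * fSeq M π π' Q Q' (t+1) := by
        rw [hnext]
        simp only [mul_add, Finset.sum_add_distrib]
        congr 1
        rw [Finset.mul_sum]
        exact Finset.sum_congr rfl fun s _ => by ring

end PDL2
section PDL3
variable {S A : Type*} [Fintype S] [Fintype A] [Nonempty S] [Nonempty A]

lemma ftel (M : FinMDP S A) (π π' Q Q' : S → A → ℝ)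
    (hπ : IsPolicy π) (hπ' : IsPolicy π')
    (hQ : M.IsQ π Q) (hQ' : M.IsQ π' Q') (n : ℕ) :
    fSeq M π π' Q Q' 0 = (∑ t ∈ Finset.range n, M.disc ^ t * uSeq M π π' Q' t)
      + M.disc ^ n * fSeq M π π' Q Q' n := by
  induction n with
  | zero => simp
  | succ n ih =>
      rw [Finset.sum_range_succ, ih, frec M π π' Q Q' hπ hπ' hQ hQ' n]
      ring

lemma fHasSum (M : FinMDP S A) (π π' Q Q' : S → A → ℝ)
    (hπ : IsPolicy π) (hπ' : IsPolicy π')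
    (hQ : M.IsQ π Q) (hQ' : M.IsQ π' Q') :
    HasSum (fun t => M.disc ^ t * uSeq M π π' Q' t) (fSeq M π π' Q Q' 0) := by
  have hγ0 : (0:ℝ) ≤ M.disc := le_of_lt M.disc_pos
  have hγ1 : M.disc < 1 := M.disc_lt_one
  obtain ⟨B, hB⟩ : ∃ B, ∀ s, |gFun π π' Q Q' s| ≤ B :=
    Finite.exists_le fun s => |gFun π π' Q Q' s|
  obtain ⟨C, hC⟩ : ∃ C, ∀ s, |wFun π π' Q' s| ≤ C :=
    Finite.exists_le fun s => |wFun π π' Q' s|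
  have hfb : ∀ t, |fSeq M π π' Q Q' t| ≤ B := by
    intro t
    calc |fSeq M π π' Q Q' t| ≤ ∑ s, |M.stateDist π t s * gFun π π' Q Q' s| :=
          Finset.abs_sum_le_sum_abs _ _
      _ ≤ ∑ s, M.stateDist π t s * B := by
          apply Finset.sum_le_sum; intro s _
          rw [abs_mul, abs_of_nonneg (stateDist_nonneg M hπ t s)]
          exact mul_le_mul_of_nonneg_left (hB s) (stateDist_nonneg M hπ t s)
      _ = B := by rw [← Finset.sum_mul, stateDist_sum M hπ t, one_mul]
  have hub : ∀ t, |uSeq M π π' Q' t| ≤ C := by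
    intro t
    calc |uSeq M π π' Q' t| ≤ ∑ s, |M.stateDist π t s * wFun π π' Q' s| :=
          Finset.abs_sum_le_sum_abs _ _
      _ ≤ ∑ s, M.stateDist π t s * C := by
          apply Finset.sum_le_sum; intro s _
          rw [abs_mul, abs_of_nonneg (stateDist_nonneg M hπ t s)]
          exact mul_le_mul_of_nonneg_left (hC s) (stateDist_nonneg M hπ t s)
      _ = C := by rw [← Finset.sum_mul, stateDist_sum M hπ t, one_mul]
  have hsum : Summable (fun t => M.disc ^ t * uSeq M π π' Q' t) := by
    apply Summable.of_norm_bounded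
      (((summable_geometric_of_lt_one hγ0 hγ1)).mul_left C)
    intro t
    rw [Real.norm_eq_abs, abs_mul, abs_pow, abs_of_nonneg hγ0, mul_comm]
    exact mul_le_mul_of_nonneg_right (hub t) (pow_nonneg hγ0 t)
  have hlim : Filter.Tendsto (fun n => M.disc ^ n * fSeq M π π' Q Q' n)
      Filter.atTop (nhds 0) := by
    have hb : ∀ n, ‖M.disc ^ n * fSeq M π π' Q Q' n‖ ≤ B * M.disc ^ n := by
      intro n
      rw [Real.norm_eq_abs, abs_mul, abs_pow, abs_of_nonneg hγ0, mul_comm]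
      exact mul_le_mul_of_nonneg_right (hfb n) (pow_nonneg hγ0 n)
    have h2 := (tendsto_pow_atTop_nhds_zero_of_lt_one hγ0 hγ1).const_mul B
    exact squeeze_zero_norm hb (by simpa using h2)
  rw [Summable.hasSum_iff_tendsto_nat hsum]
  have heq : (fun n => ∑ t ∈ Finset.range n, M.disc ^ t * uSeq M π π' Q' t)
      = fun n => fSeq M π π' Q Q' 0 - M.disc ^ n * fSeq M π π' Q Q' n := by
    funext n
    rw [ftel M π π' Q Q' hπ hπ' hQ hQ' n]
    ring
  rw [heq]
  simpa using Filter.Tendsto.sub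
    (tendsto_const_nhds (x := fSeq M π π' Q Q' 0) (f := Filter.atTop)) hlim

lemma occSummable (M : FinMDP S A) (π : S → A → ℝ) (hπ : IsPolicy π)
    (s : S) (a : A) (c : ℝ) :
    Summable (fun t => M.disc ^ t * M.stateDist π t s * π s a * c) := by
  have hγ0 : (0:ℝ) ≤ M.disc := le_of_lt M.disc_pos
  apply Summable.of_norm_bounded
    (((summable_geometric_of_lt_one hγ0 M.disc_lt_one)).mul_left |π s a * c|)
  intro t
  rw [Real.norm_eq_abs]
  calc |M.disc ^ t * M.stateDist π t s * π s a * c|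
      = M.disc ^ t * M.stateDist π t s * |π s a * c| := by
        rw [show M.disc ^ t * M.stateDist π t s * π s a * c
            = (M.disc ^ t * M.stateDist π t s) * (π s a * c) by ring,
          abs_mul, abs_of_nonneg (mul_nonneg (pow_nonneg hγ0 t)
            (stateDist_nonneg M hπ t s))]
    _ ≤ M.disc ^ t * 1 * |π s a * c| := by
        apply mul_le_mul_of_nonneg_right _ (abs_nonneg _)
        exact mul_le_mul_of_nonneg_left (stateDist_le_one M hπ t s) (pow_nonneg hγ0 t)
    _ = |π s a * c| * M.disc ^ t := by ring

end PDL3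
/-- Performance difference lemma. -/
theorem stmt0 (M : FinMDP S A) (π π' Q Q' : S → A → ℝ)
    (hπ : IsPolicy π) (hπ' : IsPolicy π')
    (hQ : M.IsQ π Q) (hQ' : M.IsQ π' Q') :
    M.scalarV π Q - M.scalarV π' Q' =
      (1 / (1 - M.disc)) * ∑ s, ∑ a, M.occ π s a * (Q' s a - vOf π' Q' s) := by
  have hγne : (1:ℝ) - M.disc ≠ 0 := by
    have := M.disc_lt_one; intro h; linarith
  have hocc : ∀ s a, M.occ π s a * (Q' s a - vOf π' Q' s)
      = (1 - M.disc) * ∑' t : ℕ, M.disc ^ t * M.stateDist π t s * π s a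
          * (Q' s a - vOf π' Q' s) := by
    intro s a
    rw [FinMDP.occ, mul_assoc, ← tsum_mul_right]
  have hswap : ∑ s, ∑ a, ∑' t : ℕ, M.disc ^ t * M.stateDist π t s * π s a
        * (Q' s a - vOf π' Q' s)
      = ∑' t : ℕ, ∑ s, ∑ a, M.disc ^ t * M.stateDist π t s * π s a
        * (Q' s a - vOf π' Q' s) := by
    calc ∑ s, ∑ a, ∑' t : ℕ, M.disc ^ t * M.stateDist π t s * π s a
            * (Q' s a - vOf π' Q' s)
        = ∑ s, ∑' t : ℕ, ∑ a, M.disc ^ t * M.stateDist π t s * π s a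
            * (Q' s a - vOf π' Q' s) :=
          Finset.sum_congr rfl fun s _ =>
            (Summable.tsum_finsetSum fun a _ => occSummable M π hπ s a _).symm
      _ = ∑' t : ℕ, ∑ s, ∑ a, M.disc ^ t * M.stateDist π t s * π s a
            * (Q' s a - vOf π' Q' s) :=
          (Summable.tsum_finsetSum fun s _ => summable_sum fun a _ => occSummable M π hπ s a _).symm
  have hpt : ∀ t : ℕ, ∑ s, ∑ a, M.disc ^ t * M.stateDist π t s * π s a
        * (Q' s a - vOf π' Q' s)
      = M.disc ^ t * uSeq M π π' Q' t := by
    intro t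
    show _ = M.disc ^ t * ∑ s, M.stateDist π t s * wFun π π' Q' s
    simp only [wFun, Finset.mul_sum]
    apply Finset.sum_congr rfl; intro s _
    apply Finset.sum_congr rfl; intro a _
    ring
  have hkey := fHasSum M π π' Q Q' hπ hπ' hQ hQ'
  have hLHS : M.scalarV π Q - M.scalarV π' Q' = fSeq M π π' Q Q' 0 := by
    show _ = ∑ s, M.init s * gFun π π' Q Q' s
    simp only [FinMDP.scalarV, gFun, mul_sub, Finset.sum_sub_distrib]
  have hR : ∑ s, ∑ a, M.occ π s a * (Q' s a - vOf π' Q' s)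
      = (1 - M.disc) * fSeq M π π' Q Q' 0 := by
    calc ∑ s, ∑ a, M.occ π s a * (Q' s a - vOf π' Q' s)
        = ∑ s, ∑ a, (1 - M.disc) * ∑' t : ℕ, M.disc ^ t * M.stateDist π t s * π s a
            * (Q' s a - vOf π' Q' s) :=
          Finset.sum_congr rfl fun s _ => Finset.sum_congr rfl fun a _ => hocc s a
      _ = (1 - M.disc) * ∑ s, ∑ a, ∑' t : ℕ, M.disc ^ t * M.stateDist π t s * π s a
            * (Q' s a - vOf π' Q' s) := by
          simp only [← Finset.mul_sum]
      _ = (1 - M.disc) * ∑' t : ℕ, M.disc ^ t * uSeq M π π' Q' t := by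
          rw [hswap]
          congr 1
          exact tsum_congr hpt
      _ = (1 - M.disc) * fSeq M π π' Q Q' 0 := by rw [hkey.tsum_eq]
  rw [hLHS, hR, one_div, inv_mul_cancel_left₀ hγne]
end

section
/- For any policy π of a finite discounted MDP and any nonnegative function g : S×A → ℝ, E_{(s̄,ā)∼d^π} E_{s∼P(·|s̄,ā)} E_{a∼π(·|s)}[g(s,a)] ≤ (1/γ) · E_{(s,a)∼d^π}[g(s,a)]. -/
open Finset

variable {S A : Type*} [Fintype S] [Fintype A] [Nonempty S] [Nonempty A]

lemma sd_nonneg (M : FinMDP S A) (π : S → A → ℝ) (hπ : IsPolicy π) :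
    ∀ t s, 0 ≤ M.stateDist π t s := by
  intro t
  induction t with
  | zero => exact M.init_nonneg
  | succ t ih =>
    intro s'
    exact Finset.sum_nonneg fun s _ => Finset.sum_nonneg fun a _ =>
      mul_nonneg (mul_nonneg (ih s) (hπ.1 s a)) (M.P_nonneg s a s')

lemma sd_sum (M : FinMDP S A) (π : S → A → ℝ) (hπ : IsPolicy π) :
    ∀ t, ∑ s, M.stateDist π t s = 1 := by
  intro t
  induction t with
  | zero => exact M.init_sum
  | succ t ih =>
    show ∑ s', ∑ s, ∑ a, M.stateDist π t s * π s a * M.P s a s' = 1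
    rw [Finset.sum_comm]
    have h1 : ∀ s, ∑ s', ∑ a, M.stateDist π t s * π s a * M.P s a s'
        = M.stateDist π t s := by
      intro s
      rw [Finset.sum_comm]
      simp_rw [← Finset.mul_sum, M.P_sum, mul_one]
      rw [← Finset.mul_sum, hπ.2, mul_one]
    simp_rw [h1]; exact ih

lemma sd_le_one (M : FinMDP S A) (π : S → A → ℝ) (hπ : IsPolicy π) (t : ℕ) (s : S) :
    M.stateDist π t s ≤ 1 := by
  calc M.stateDist π t s ≤ ∑ s', M.stateDist π t s' :=
        Finset.single_le_sum (fun s' _ => sd_nonneg M π hπ t s') (Finset.mem_univ s)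
    _ = 1 := sd_sum M π hπ t

lemma sd_summable (M : FinMDP S A) (π : S → A → ℝ) (hπ : IsPolicy π) (s : S) :
    Summable (fun t => M.disc ^ t * M.stateDist π t s) := by
  apply Summable.of_nonneg_of_le
    (fun t => mul_nonneg (pow_nonneg M.disc_pos.le t) (sd_nonneg M π hπ t s))
    (fun t => mul_le_of_le_one_right (pow_nonneg M.disc_pos.le t) (sd_le_one M π hπ t s))
    (summable_geometric_of_lt_one M.disc_pos.le M.disc_lt_one)

theorem stmt2 (M : FinMDP S A) (π : S → A → ℝ) (hπ : IsPolicy π)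
    (g : S → A → ℝ) (hg : ∀ s a, 0 ≤ g s a) :
    ∑ sb, ∑ ab, M.occ π sb ab * ∑ s, M.P sb ab s * ∑ a, π s a * g s a
      ≤ (1 / M.disc) * ∑ s, ∑ a, M.occ π s a * g s a := by
  obtain ⟨hπ0, hπ1⟩ := hπ
  have hπ' : IsPolicy π := ⟨hπ0, hπ1⟩
  have hγ0 := M.disc_pos
  have hγ1 := M.disc_lt_one
  set γ := M.disc with hγ
  set D : S → ℝ := fun s => (1 - γ) * ∑' t : ℕ, γ ^ t * M.stateDist π t s with hD
  have hDnn : ∀ s, 0 ≤ D s := fun s =>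
    mul_nonneg (by linarith) (tsum_nonneg fun t =>
      mul_nonneg (pow_nonneg hγ0.le t) (sd_nonneg M π hπ' t s))
  have hocc : ∀ s a, M.occ π s a = D s * π s a := by
    intro s a
    show (1 - γ) * ∑' t : ℕ, γ ^ t * M.stateDist π t s * π s a = _
    rw [tsum_mul_right, hD, mul_assoc]
  set f : S → ℝ := fun s => ∑ a, π s a * g s a with hf
  have hfnn : ∀ s, 0 ≤ f s := fun s =>
    Finset.sum_nonneg fun a _ => mul_nonneg (hπ0 s a) (hg s a)
  -- key identity
  have hkey : ∀ s, γ * ∑ sb, ∑ ab, M.occ π sb ab * M.P sb ab s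
      = D s - (1 - γ) * M.init s := by
    intro s
    have h1 : ∀ sb ab, M.occ π sb ab * M.P sb ab s
        = (1 - γ) * ∑' t : ℕ, γ ^ t * M.stateDist π t sb * π sb ab * M.P sb ab s := by
      intro sb ab
      show ((1 - γ) * ∑' t : ℕ, γ ^ t * M.stateDist π t sb * π sb ab) * M.P sb ab s = _
      rw [mul_assoc, ← tsum_mul_right]
    have hsumm : ∀ sb ab, Summable (fun t : ℕ =>
        γ ^ t * M.stateDist π t sb * π sb ab * M.P sb ab s) := by
      intro sb ab
      exact ((sd_summable M π hπ' sb).mul_right _).mul_right _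
    have hsumm2 : ∀ sb, Summable (fun t : ℕ =>
        ∑ ab, γ ^ t * M.stateDist π t sb * π sb ab * M.P sb ab s) :=
      fun sb => summable_sum (fun ab _ => hsumm sb ab)
    have h2 : ∑ sb, ∑ ab, M.occ π sb ab * M.P sb ab s
        = (1 - γ) * ∑' t : ℕ, γ ^ t * M.stateDist π (t + 1) s := by
      simp_rw [h1, ← Finset.mul_sum]
      congr 1
      have e1 : ∀ sb, ∑ ab, ∑' t : ℕ, γ ^ t * M.stateDist π t sb * π sb ab * M.P sb ab s
          = ∑' t : ℕ, ∑ ab, γ ^ t * M.stateDist π t sb * π sb ab * M.P sb ab s :=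
        fun sb => (Summable.tsum_finsetSum (fun ab _ => hsumm sb ab)).symm
      simp_rw [e1]
      rw [← Summable.tsum_finsetSum (fun sb _ => hsumm2 sb)]
      congr 1
      funext t
      show ∑ sb, ∑ ab, γ ^ t * M.stateDist π t sb * π sb ab * M.P sb ab s
          = γ ^ t * ∑ sb, ∑ ab, M.stateDist π t sb * π sb ab * M.P sb ab s
      simp_rw [Finset.mul_sum]
      congr 1; funext sb; congr 1; funext ab; ring
    have h3 : Summable (fun t : ℕ => γ ^ t * M.stateDist π t s) := sd_summable M π hπ' s
    have h4 : ∑' t : ℕ, γ ^ t * M.stateDist π t s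
        = γ ^ 0 * M.stateDist π 0 s + ∑' t : ℕ, γ ^ (t + 1) * M.stateDist π (t + 1) s :=
      Summable.tsum_eq_zero_add h3
    have h5 : γ * ∑' t : ℕ, γ ^ t * M.stateDist π (t + 1) s
        = ∑' t : ℕ, γ ^ (t + 1) * M.stateDist π (t + 1) s := by
      rw [← tsum_mul_left]
      congr 1; funext t; ring
    have : γ ^ 0 * M.stateDist π 0 s = M.init s := by
      simp [FinMDP.stateDist]
    rw [this] at h4
    have hDs : D s = (1 - γ) * ∑' t : ℕ, γ ^ t * M.stateDist π t s := rfl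
    rw [h2, hDs, h4, ← h5]
    ring
  -- rearrange LHS
  have hLHS : ∑ sb, ∑ ab, M.occ π sb ab * ∑ s, M.P sb ab s * f s
      = ∑ s, (∑ sb, ∑ ab, M.occ π sb ab * M.P sb ab s) * f s := by
    simp_rw [Finset.mul_sum]
    have e : ∀ sb, ∑ ab, ∑ s, M.occ π sb ab * (M.P sb ab s * f s)
        = ∑ s, ∑ ab, M.occ π sb ab * (M.P sb ab s * f s) :=
      fun sb => Finset.sum_comm
    simp_rw [e]
    rw [Finset.sum_comm]
    congr 1; funext s
    rw [Finset.sum_mul]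
    congr 1; funext sb
    rw [Finset.sum_mul]
    congr 1; funext ab
    ring
  have hRHS : ∑ s, ∑ a, M.occ π s a * g s a = ∑ s, D s * f s := by
    congr 1; funext s
    simp_rw [hocc, hf, Finset.mul_sum]
    congr 1; funext a; ring
  calc ∑ sb, ∑ ab, M.occ π sb ab * ∑ s, M.P sb ab s * ∑ a, π s a * g s a
      = ∑ s, (∑ sb, ∑ ab, M.occ π sb ab * M.P sb ab s) * f s := hLHS
    _ ≤ ∑ s, (1 / γ) * (D s * f s) := by
        apply Finset.sum_le_sum
        intro s _
        have h := hkey s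
        have hc : ∑ sb, ∑ ab, M.occ π sb ab * M.P sb ab s
            = (1 / γ) * (D s - (1 - γ) * M.init s) := by
          field_simp
          linarith [h]
        rw [hc]
        have hi : 0 ≤ (1 - γ) * M.init s :=
          mul_nonneg (by linarith) (M.init_nonneg s)
        have : (D s - (1 - γ) * M.init s) * f s ≤ D s * f s := by
          apply mul_le_mul_of_nonneg_right _ (hfnn s)
          linarith
        calc (1 / γ) * (D s - (1 - γ) * M.init s) * f s
            = (1 / γ) * ((D s - (1 - γ) * M.init s) * f s) := by ring
          _ ≤ (1 / γ) * (D s * f s) := by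
              apply mul_le_mul_of_nonneg_left this
              positivity
    _ = (1 / γ) * ∑ s, ∑ a, M.occ π s a * g s a := by
        rw [hRHS, Finset.mul_sum]
end

section
/- Exponential weights regret bound: Let A be a finite nonempty set, γ ∈ (0,1), T ≥ 1, and 0 < η ≤ (1−γ)/2. Let g^1, …, g^T : A → ℝ satisfy |g^t(a)| ≤ 1/(1−γ) for all t and a. Let p^1 be the uniform distribution on A and define p^{t+1}(a) = p^t(a)·exp(η·(g^t(a) − E_{a'∼p^t}[g^t(a')])) / Σ_{b} p^t(b)·exp(η·(g^t(b) − E_{a'∼p^t}[g^t(a')])). Then for any probability distribution q on A, Σ_{t=1}^T (E_{a∼q}[g^t(a)] − E_{a∼p^t}[g^t(a)]) ≤ log(|A|)/η + η·T/(1−γ)². -/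
open Finset

variable {S A : Type*} [Fintype S] [Fintype A] [Nonempty S] [Nonempty A]

lemma exp_le_one_add_add_sq {x : ℝ} (hx : |x| ≤ 1) : Real.exp x ≤ 1 + x + x ^ 2 := by
  have h := Real.exp_bound hx (by norm_num : (0:ℕ) < 3)
  have h3 : |x| ^ 3 ≤ x ^ 2 := by
    calc |x| ^ 3 ≤ |x| ^ 2 := pow_le_pow_of_le_one (abs_nonneg x) hx (by norm_num)
      _ = x ^ 2 := sq_abs x
  simp [Finset.sum_range_succ, Nat.factorial] at h
  have h' := (abs_sub_le_iff.1 h).1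
  nlinarith [h', h3]

set_option maxHeartbeats 1000000 in
/-- Exponential weights regret bound. -/
theorem stmt5 {α : Type*} [Fintype α] [Nonempty α]
    (γ : ℝ) (hγ0 : 0 < γ) (hγ1 : γ < 1) (T : ℕ) (hT : 1 ≤ T)
    (η : ℝ) (hη0 : 0 < η) (hη : η ≤ (1 - γ) / 2)
    (g : ℕ → α → ℝ) (hg : ∀ t ∈ Finset.Icc 1 T, ∀ a, |g t a| ≤ 1 / (1 - γ))
    (p : ℕ → α → ℝ)
    (hp1 : ∀ a, p 1 a = 1 / Fintype.card α)
    (hupd : ∀ t, 1 ≤ t → t < T → ∀ a,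
      p (t + 1) a =
        p t a * Real.exp (η * (g t a - ∑ a', p t a' * g t a')) /
          ∑ b, p t b * Real.exp (η * (g t b - ∑ a', p t a' * g t a')))
    (q : α → ℝ) (hq0 : ∀ a, 0 ≤ q a) (hq1 : ∑ a, q a = 1) :
    ∑ t ∈ Finset.Icc 1 T, ((∑ a, q a * g t a) - ∑ a, p t a * g t a)
      ≤ Real.log (Fintype.card α) / η + η * T / (1 - γ) ^ 2 := by
  have hγ : (0:ℝ) < 1 - γ := by linarith
  set B : ℝ := 1 / (1 - γ) with hB
  have hBpos : 0 < B := by positivity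
  set m : ℕ → ℝ := fun t => ∑ a, p t a * g t a with hm
  have hmdef : ∀ t, m t = ∑ a, p t a * g t a := fun t => by rw [hm]
  set X : ℕ → α → ℝ := fun t a => ∑ s ∈ Finset.Icc 1 t, (g s a - m s) with hX
  set Z : ℕ → ℝ := fun t => ∑ a, Real.exp (η * X t a) with hZ
  have hZdef : ∀ t, Z t = ∑ a, Real.exp (η * X t a) := fun t => by rw [hZ]
  have hZpos : ∀ t, 0 < Z t := fun t => by
    rw [hZdef]; exact Finset.sum_pos (fun a _ => Real.exp_pos _) Finset.univ_nonempty
  have hX0 : ∀ a, X 0 a = 0 := by intro a; simp [hX]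
  have hXsucc : ∀ t a, X (t + 1) a = X t a + (g (t + 1) a - m (t + 1)) := by
    intro t a
    simp only [hX]
    exact Finset.sum_Icc_succ_top (Nat.le_add_left 1 t) _
  have key : ∀ t, 1 ≤ t → t ≤ T → ∀ a,
      p t a = Real.exp (η * X (t - 1) a) / Z (t - 1) := by
    intro t ht1
    induction t, ht1 using Nat.le_induction with
    | base =>
      intro _ a
      simp [hp1 a, hZdef, hX0]
    | succ t ht ih =>
      intro hle a
      have htT : t < T := by omega
      have ihh := ih (le_of_lt htT)
      have hXt : ∀ b, X t b = X (t - 1) b + (g t b - m t) := by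
        intro b
        obtain ⟨t', rfl⟩ : ∃ t', t = t' + 1 := ⟨t - 1, by omega⟩
        simpa using hXsucc t' b
      have hnum : ∀ b, p t b * Real.exp (η * (g t b - m t))
          = Real.exp (η * X t b) / Z (t - 1) := by
        intro b
        rw [ihh b, div_mul_eq_mul_div, ← Real.exp_add]
        congr 2
        rw [hXt b]; ring
      rw [hupd t ht htT a, ← hmdef t]
      have hden : (∑ b, p t b * Real.exp (η * (g t b - m t))) = Z t / Z (t - 1) := by
        rw [Finset.sum_congr rfl (fun b _ => hnum b), ← Finset.sum_div, ← hZdef t]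
      rw [hden, hnum a]
      simp only [Nat.add_sub_cancel]
      field_simp
      rw [div_mul_eq_div_div, div_self (hZpos _).ne']
  have hp_nonneg : ∀ t, 1 ≤ t → t ≤ T → ∀ a, 0 ≤ p t a := by
    intro t h1 h2 a; rw [key t h1 h2 a]; positivity
  have hp_sum : ∀ t, 1 ≤ t → t ≤ T → ∑ a, p t a = 1 := by
    intro t h1 h2
    rw [Finset.sum_congr rfl (fun a _ => key t h1 h2 a), ← Finset.sum_div, ← hZdef,
      div_self (hZpos _).ne']
  -- per-step bound
  have step : ∀ t, 1 ≤ t → t ≤ T → Z t ≤ Z (t - 1) * (1 + η ^ 2 * B ^ 2) := by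
    intro t h1 h2
    have hXt : ∀ b, X t b = X (t - 1) b + (g t b - m t) := by
      intro b
      obtain ⟨t', rfl⟩ : ∃ t', t = t' + 1 := ⟨t - 1, by omega⟩
      simpa using hXsucc t' b
    have e1 : Z t = Z (t - 1) * ∑ a, p t a * Real.exp (η * (g t a - m t)) := by
      rw [Finset.mul_sum, hZdef t]
      refine Finset.sum_congr rfl fun a _ => ?_
      rw [key t h1 h2 a, hXt a, mul_add, Real.exp_add]
      field_simp
      rw [div_self (hZpos _).ne']
    have hgb : ∀ a, |g t a| ≤ B := fun a => hg t (Finset.mem_Icc.mpr ⟨h1, h2⟩) a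
    have hm_abs : |m t| ≤ B := by
      rw [hmdef t]
      calc |∑ a, p t a * g t a| ≤ ∑ a, |p t a * g t a| := Finset.abs_sum_le_sum_abs _ _
        _ ≤ ∑ a, p t a * B := by
            refine Finset.sum_le_sum fun a _ => ?_
            rw [abs_mul, abs_of_nonneg (hp_nonneg t h1 h2 a)]
            exact mul_le_mul_of_nonneg_left (hgb a) (hp_nonneg t h1 h2 a)
        _ = B := by rw [← Finset.sum_mul, hp_sum t h1 h2, one_mul]
    have hx_abs : ∀ a, |η * (g t a - m t)| ≤ 1 := by
      intro a
      rw [abs_mul, abs_of_pos hη0]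
      have habs : |g t a - m t| ≤ 2 * B := by
        calc |g t a - m t| ≤ |g t a| + |m t| := abs_sub _ _
          _ ≤ 2 * B := by linarith [hgb a]
      have h2B : η * (2 * B) ≤ 1 := by
        have : η * (2 * B) = 2 * η / (1 - γ) := by rw [hB]; ring
        rw [this, div_le_one hγ]; linarith
      nlinarith [abs_nonneg (g t a - m t)]
    have inner : ∑ a, p t a * Real.exp (η * (g t a - m t)) ≤ 1 + η ^ 2 * B ^ 2 := by
      have hterm : ∀ a ∈ Finset.univ, p t a * Real.exp (η * (g t a - m t))
          ≤ p t a * (1 + η * (g t a - m t) + (η * (g t a - m t)) ^ 2) := fun a _ =>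
        mul_le_mul_of_nonneg_left (exp_le_one_add_add_sq (hx_abs a)) (hp_nonneg t h1 h2 a)
      have e2 : ∑ a, p t a * (1 + η * (g t a - m t) + (η * (g t a - m t)) ^ 2)
          = 1 + η ^ 2 * ((∑ a, p t a * (g t a) ^ 2) - (m t) ^ 2) := by
        have expand : ∀ a ∈ Finset.univ, p t a * (1 + η * (g t a - m t) + (η * (g t a - m t)) ^ 2)
            = p t a + (η * (p t a * g t a) - η * m t * p t a)
              + (η ^ 2 * (p t a * (g t a) ^ 2)
                - 2 * η ^ 2 * m t * (p t a * g t a) + η ^ 2 * (m t) ^ 2 * p t a) := by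
          intro a _; ring
        rw [Finset.sum_congr rfl expand]
        simp only [Finset.sum_add_distrib, Finset.sum_sub_distrib, ← Finset.mul_sum]
        rw [hp_sum t h1 h2, ← hmdef t]
        ring
      have hgsq : ∑ a, p t a * (g t a) ^ 2 ≤ B ^ 2 := by
        calc ∑ a, p t a * (g t a) ^ 2 ≤ ∑ a, p t a * B ^ 2 := by
              refine Finset.sum_le_sum fun a _ => ?_
              refine mul_le_mul_of_nonneg_left ?_ (hp_nonneg t h1 h2 a)
              calc (g t a) ^ 2 = |g t a| ^ 2 := (sq_abs _).symm
                _ ≤ B ^ 2 := pow_le_pow_left₀ (abs_nonneg _) (hgb a) 2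
          _ = B ^ 2 := by rw [← Finset.sum_mul, hp_sum t h1 h2, one_mul]
      calc ∑ a, p t a * Real.exp (η * (g t a - m t))
          ≤ ∑ a, p t a * (1 + η * (g t a - m t) + (η * (g t a - m t)) ^ 2) :=
            Finset.sum_le_sum hterm
        _ = 1 + η ^ 2 * ((∑ a, p t a * (g t a) ^ 2) - (m t) ^ 2) := e2
        _ ≤ 1 + η ^ 2 * B ^ 2 := by
            have h5 : (∑ a, p t a * (g t a) ^ 2) - (m t) ^ 2 ≤ B ^ 2 :=
              le_trans (sub_le_self _ (sq_nonneg (m t))) hgsq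
            exact add_le_add_right (mul_le_mul_of_nonneg_left h5 (sq_nonneg η)) 1
    calc Z t = Z (t - 1) * ∑ a, p t a * Real.exp (η * (g t a - m t)) := e1
      _ ≤ Z (t - 1) * (1 + η ^ 2 * B ^ 2) :=
          mul_le_mul_of_nonneg_left inner (hZpos _).le
  -- telescoped log bound
  have logstep : ∀ t, 1 ≤ t → t ≤ T →
      Real.log (Z t) ≤ Real.log (Z (t - 1)) + η ^ 2 * B ^ 2 := by
    intro t h1 h2
    have hc : (0:ℝ) < 1 + η ^ 2 * B ^ 2 := by positivity
    calc Real.log (Z t) ≤ Real.log (Z (t - 1) * (1 + η ^ 2 * B ^ 2)) :=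
          Real.log_le_log (hZpos t) (step t h1 h2)
      _ = Real.log (Z (t - 1)) + Real.log (1 + η ^ 2 * B ^ 2) :=
          Real.log_mul (hZpos _).ne' hc.ne'
      _ ≤ Real.log (Z (t - 1)) + η ^ 2 * B ^ 2 := by
          have := Real.log_le_sub_one_of_pos hc
          linarith
  have tele : ∀ t, t ≤ T → Real.log (Z t) ≤ Real.log (Z 0) + t * (η ^ 2 * B ^ 2) := by
    intro t
    induction t with
    | zero => intro _; simp
    | succ n ih =>
      intro h
      have h1 := logstep (n + 1) (by omega) h
      simp only [Nat.add_sub_cancel] at h1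
      have h2 := ih (by omega)
      push_cast
      linarith
  -- Jensen lower bound
  have jensen : η * ∑ a, q a * X T a ≤ Real.log (Z T) := by
    have h1 : Real.exp (∑ a, q a • (η * X T a)) ≤ ∑ a, q a • Real.exp (η * X T a) :=
      convexOn_exp.map_sum_le (fun a _ => hq0 a) hq1 (fun a _ => Set.mem_univ _)
    simp only [smul_eq_mul] at h1
    have h2 : ∑ a, q a * Real.exp (η * X T a) ≤ Z T := by
      rw [hZdef]
      refine Finset.sum_le_sum fun a _ => ?_
      have hle1 : q a ≤ 1 := by
        rw [← hq1]
        exact Finset.single_le_sum (fun b _ => hq0 b) (Finset.mem_univ a)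
      nlinarith [Real.exp_pos (η * X T a), hq0 a]
    have h3 := Real.log_le_log (Real.exp_pos _) (h1.trans h2)
    rw [Real.log_exp] at h3
    have h4 : ∑ a, q a * (η * X T a) = η * ∑ a, q a * X T a := by
      rw [Finset.mul_sum]; exact Finset.sum_congr rfl fun a _ => by ring
    linarith [h4 ▸ h3]
  have hqX : ∑ a, q a * X T a
      = ∑ t ∈ Finset.Icc 1 T, ((∑ a, q a * g t a) - m t) := by
    simp only [hX, Finset.mul_sum]
    rw [Finset.sum_comm]
    refine Finset.sum_congr rfl fun t _ => ?_
    rw [Finset.sum_congr rfl (fun a (_ : a ∈ Finset.univ) => mul_sub (q a) (g t a) (m t)),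
      Finset.sum_sub_distrib, ← Finset.sum_mul, hq1, one_mul]
  have hZ0 : Real.log (Z 0) = Real.log (Fintype.card α) := by
    rw [hZdef]
    simp [hX0]
  have main : η * ∑ t ∈ Finset.Icc 1 T, ((∑ a, q a * g t a) - ∑ a, p t a * g t a)
      ≤ Real.log (Fintype.card α) + T * (η ^ 2 * B ^ 2) := by
    have hrw : ∑ t ∈ Finset.Icc 1 T, ((∑ a, q a * g t a) - ∑ a, p t a * g t a)
        = ∑ a, q a * X T a := by
      rw [hqX]
    rw [hrw]
    calc η * ∑ a, q a * X T a ≤ Real.log (Z T) := jensen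
      _ ≤ Real.log (Z 0) + T * (η ^ 2 * B ^ 2) := tele T le_rfl
      _ = Real.log (Fintype.card α) + T * (η ^ 2 * B ^ 2) := by rw [hZ0]
  calc ∑ t ∈ Finset.Icc 1 T, ((∑ a, q a * g t a) - ∑ a, p t a * g t a)
      = (η * ∑ t ∈ Finset.Icc 1 T, ((∑ a, q a * g t a) - ∑ a, p t a * g t a)) / η := by
        field_simp
    _ ≤ (Real.log (Fintype.card α) + T * (η ^ 2 * B ^ 2)) / η := by gcongr
    _ = Real.log (Fintype.card α) / η + η * T / (1 - γ) ^ 2 := by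
        rw [hB]
        field_simp
end
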